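/- There exist 3×3 real symmetric positive semidefinite matrices W₁, W₂, W₃ such that λ_min(W₂ + W₃) − λ_min(W₂) < λ_min(W₁ + W₂ + W₃) − λ_min(W₁ + W₂), where λ_min denotes the smallest eigenvalue. Consequently, the set function S ↦ λ_min(Σ_{s∈S} W_s) on subsets of a finite family of positive semidefinite matrices is not submodular in general: the diminishing-returns inequality for adding the element associated with W₃ fails with A = {2} ⊆ B = {1,2}. -/

import Mathlib

open Matrix

/-- The smallest eigenvalue of a real symmetric matrix. -/
noncomputable def lambdaMin {n : ℕ} (W : Matrix (Fin n) (Fin n) ℝ)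
    (hW : W.IsHermitian) : ℝ :=
  ⨅ i, hW.eigenvalues i

lemma lambdaMin_congr {n : ℕ} {W W' : Matrix (Fin n) (Fin n) ℝ}
    (h : W.IsHermitian) (h' : W'.IsHermitian) (hWW : W = W') :
    lambdaMin W h = lambdaMin W' h' := by subst hWW; rfl

lemma lambdaMin_of_det_zero {n : ℕ} [NeZero n] {W : Matrix (Fin n) (Fin n) ℝ}
    (hW : W.PosSemidef) (hd : W.det = 0) : lambdaMin W hW.1 = 0 := by
  have hprod : (∏ i, (hW.1.eigenvalues i : ℝ)) = 0 := by
    have := hW.1.det_eq_prod_eigenvalues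
    simp only [RCLike.ofReal_real_eq_id, id] at this
    rw [← this]; exact_mod_cast hd
  obtain ⟨i, hi⟩ := Finset.prod_eq_zero_iff.mp hprod
  refine le_antisymm ?_ (le_ciInf fun j => hW.eigenvalues_nonneg j)
  calc ⨅ j, hW.1.eigenvalues j ≤ hW.1.eigenvalues i :=
        ciInf_le (Finite.bddBelow_range _) i
    _ = 0 := hi.2

lemma lambdaMin_one {n : ℕ} [NeZero n] (h : (1 : Matrix (Fin n) (Fin n) ℝ).IsHermitian) :
    lambdaMin 1 h = 1 := by
  have heig : ∀ i, h.eigenvalues i = 1 := by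
    intro i
    have hv := h.mulVec_eigenvectorBasis i
    have hne : ⇑(h.eigenvectorBasis i) ≠ 0 := by
      intro h0; apply h.eigenvectorBasis.orthonormal.ne_zero i; ext j; simp [h0]
    rw [Matrix.one_mulVec] at hv
    obtain ⟨x, hx⟩ := Function.ne_iff.mp hne
    have hfx := congrFun hv x
    simp only [Pi.smul_apply, smul_eq_mul, Pi.zero_apply] at hfx hx
    exact mul_right_cancel₀ hx (by rw [one_mul]; exact hfx.symm)
  unfold lambdaMin
  simp [heig]

theorem lambdaMin_not_submodular :
    ∃ W₁ W₂ W₃ : Matrix (Fin 3) (Fin 3) ℝ,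
      ∃ (h₁ : W₁.PosSemidef) (h₂ : W₂.PosSemidef) (h₃ : W₃.PosSemidef),
        lambdaMin (W₂ + W₃) (h₂.add h₃).1 - lambdaMin W₂ h₂.1 <
          lambdaMin (W₁ + W₂ + W₃) ((h₁.add h₂).add h₃).1 -
            lambdaMin (W₁ + W₂) (h₁.add h₂).1 := by
  have pd1 : (Matrix.diagonal ![(1:ℝ),1,0]).PosSemidef :=
    Matrix.posSemidef_diagonal_iff.mpr (by
      intro i; fin_cases i <;> norm_num)
  have pd3 : (Matrix.diagonal ![(0:ℝ),0,1]).PosSemidef :=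
    Matrix.posSemidef_diagonal_iff.mpr (by
      intro i; fin_cases i <;> norm_num)
  refine ⟨Matrix.diagonal ![1,1,0], 0, Matrix.diagonal ![0,0,1],
    pd1, Matrix.PosSemidef.zero, pd3, ?_⟩
  have hsum : Matrix.diagonal ![(1:ℝ),1,0] + 0 + Matrix.diagonal ![0,0,1]
      = (1 : Matrix (Fin 3) (Fin 3) ℝ) := by
    ext i j
    fin_cases i <;> fin_cases j <;> simp [Matrix.diagonal, Matrix.one_apply]
  have e23 : lambdaMin _ ((Matrix.PosSemidef.zero.add pd3).1) = 0 :=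
    lambdaMin_of_det_zero (Matrix.PosSemidef.zero.add pd3) (by
      rw [zero_add, Matrix.det_diagonal]; simp [Fin.prod_univ_three])
  have e2 : lambdaMin _ (Matrix.PosSemidef.zero.1 :
      (0 : Matrix (Fin 3) (Fin 3) ℝ).IsHermitian) = 0 :=
    lambdaMin_of_det_zero Matrix.PosSemidef.zero Matrix.det_zero
  have e12 : lambdaMin _ ((pd1.add Matrix.PosSemidef.zero).1) = 0 :=
    lambdaMin_of_det_zero (pd1.add Matrix.PosSemidef.zero) (by
      rw [add_zero, Matrix.det_diagonal]; simp [Fin.prod_univ_three])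
  have e123 : lambdaMin _ (((pd1.add Matrix.PosSemidef.zero).add pd3).1) = 1 := by
    rw [lambdaMin_congr _ (Matrix.isHermitian_one) hsum]
    exact lambdaMin_one _
  rw [e23, e2, e12, e123]
  norm_num
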